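/- Correctness of the 2-cycle circuit (Fig. 11): for a ≠ b in (Fin d)^n with a_n ≠ b_n, the composition S₁ ∘ S₂ ∘ S₁ (where S₁ applies X_{a_i b_i} to coordinate i for each i<n whenever x_n = b_n, and S₂ applies X_{a_n b_n} to coordinate n whenever (x₁,…,x_{n−1}) = (a₁,…,a_{n−1})) equals the transposition of a and b on (Fin d)^n. -/
import Mathlib


/-- Correctness of the 2-cycle circuit (Fig. 11): for `a ≠ b` in `(Fin d)^n` with
`a_n ≠ b_n`, the composition `S₁ ∘ S₂ ∘ S₁` — where `S₁` applies `X_{a_i b_i}` to each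
coordinate `i < n-1` (0-based) whenever `x_n = b_n`, and `S₂` applies `X_{a_n b_n}` to
the last coordinate whenever the first `n-1` coordinates equal those of `a` — is the
transposition of `a` and `b`. -/
theorem stmt_17 (d n : ℕ) (hd : 2 ≤ d) (hn : 2 ≤ n) (a b : Fin n → Fin d) (hab : a ≠ b)
    (hlast : a ⟨n - 1, by omega⟩ ≠ b ⟨n - 1, by omega⟩) :
    let last : Fin n := ⟨n - 1, by omega⟩
    let S₁ : (Fin n → Fin d) → (Fin n → Fin d) := fun x =>
      if x last = b last then
        (fun i => if (i : ℕ) < n - 1 then Equiv.swap (a i) (b i) (x i) else x i)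
      else x
    let S₂ : (Fin n → Fin d) → (Fin n → Fin d) := fun x =>
      if ∀ i : Fin n, (i : ℕ) < n - 1 → x i = a i then
        Function.update x last (Equiv.swap (a last) (b last) (x last))
      else x
    ∀ x : Fin n → Fin d, S₁ (S₂ (S₁ x)) = Equiv.swap a b x := by
  intro last S₁ S₂ x
  have hne : ∀ i : Fin n, i.1 < n - 1 → i ≠ last := by
    intro i h hcon
    have : i.1 = n - 1 := by rw [hcon]
    omega
  have key : ∀ i : Fin n, ¬ i.1 < n - 1 → i = last := by
    intro i h
    have := i.isLt
    exact Fin.ext (by simp only [last]; omega)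
  by_cases hx : x = a
  · rw [hx, Equiv.swap_apply_left]
    have h1 : S₁ a = a := by
      simp only [S₁]; rw [if_neg hlast]
    rw [h1]
    have h2 : S₂ a = Function.update a last (b last) := by
      simp only [S₂]
      rw [if_pos (fun i _ => trivial), Equiv.swap_apply_left]
    rw [h2]
    simp only [S₁]
    rw [if_pos (Function.update_self _ _ _)]
    funext i
    by_cases hi : i.1 < n - 1
    · rw [if_pos hi, Function.update_of_ne (hne i hi), Equiv.swap_apply_left]
    · rw [if_neg hi, key i hi, Function.update_self]
  · by_cases hx' : x = b
    · rw [hx', Equiv.swap_apply_right]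
      have h1 : S₁ b = Function.update a last (b last) := by
        simp only [S₁]; rw [if_pos trivial]
        funext i
        by_cases hi : i.1 < n - 1
        · rw [if_pos hi, Function.update_of_ne (hne i hi), Equiv.swap_apply_right]
        · rw [if_neg hi, key i hi, Function.update_self]
      have h2 : S₂ (Function.update a last (b last)) = a := by
        simp only [S₂]
        rw [if_pos]
        · rw [Function.update_self, Equiv.swap_apply_right, Function.update_idem,
            Function.update_eq_self]
        · intro i hi
          rw [Function.update_of_ne (hne i hi)]
      have h3 : S₁ a = a := by
        simp only [S₁]; rw [if_neg hlast]
      rw [h1, h2, h3]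
    · rw [Equiv.swap_apply_of_ne_of_ne hx hx']
      by_cases hxl : x last = b last
      · have h1 : S₁ x =
            fun i => if i.1 < n - 1 then Equiv.swap (a i) (b i) (x i) else x i := by
          simp only [S₁]; rw [if_pos hxl]
        have hcond : ¬ ∀ i : Fin n, i.1 < n - 1 →
            (if i.1 < n - 1 then Equiv.swap (a i) (b i) (x i) else x i) = a i := by
          intro h
          apply hx'
          funext i
          by_cases hi : i.1 < n - 1
          · have h' := h i hi
            rw [if_pos hi] at h'
            have heq : Equiv.swap (a i) (b i) (x i) = Equiv.swap (a i) (b i) (b i) := by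
              rw [h', Equiv.swap_apply_right]
            exact (Equiv.swap (a i) (b i)).injective heq
          · rw [key i hi]; exact hxl
        have h2 : S₂ (S₁ x) = S₁ x := by
          rw [h1]; simp only [S₂]; rw [if_neg hcond]
        rw [h2, h1]
        simp only [S₁]
        have hl : (if (last : Fin n).1 < n - 1 then
            Equiv.swap (a last) (b last) (x last) else x last) = b last := by
          rw [if_neg (by simp only [last]; omega)]; exact hxl
        rw [if_pos hl]
        funext i
        by_cases hi : i.1 < n - 1
        · rw [if_pos hi, if_pos hi, Equiv.swap_apply_self]
        · rw [if_neg hi, if_neg hi]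
      · have h1 : S₁ x = x := by simp only [S₁]; rw [if_neg hxl]
        have h2 : S₂ x = x := by
          simp only [S₂]
          by_cases hc : ∀ i : Fin n, (i : ℕ) < n - 1 → x i = a i
          · rw [if_pos hc]
            have hxa : x last ≠ a last := by
              intro h
              apply hx
              funext i
              by_cases hi : i.1 < n - 1
              · exact hc i hi
              · rw [key i hi]; exact h
            rw [Equiv.swap_apply_of_ne_of_ne hxa hxl, Function.update_eq_self]
          · rw [if_neg hc]
        rw [h1, h2, h1]
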